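/- If a sequence of row-stochastic matrices {P^{[n]}} has no prominent families (for every sequence a_n = o(n), Φ_{P^{[n]}}(a_n) = o(n)), then for every fixed k ∈ N the maximum column average of (P^{[n]})ᵏ converges to 0 as n → ∞, i.e., the sequence is finite-time wise. -/

import Mathlib

open Filter

/-- `Φ_P(s)`: the maximum total one-time influence of a set of `s` nodes.
In particular `Φ_P(1)` is the maximum column sum of `P`. -/
noncomputable def Phi {n : ℕ} (P : Matrix (Fin n) (Fin n) ℝ) (s : ℕ) : ℝ :=
  sSup ((fun B : Finset (Fin n) => ∑ i, ∑ j ∈ B, P i j) ''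
    {B : Finset (Fin n) | B.card = s})

/-- Extension of `Φ_P` to nonnegative real arguments. -/
noncomputable def PhiR {n : ℕ} (P : Matrix (Fin n) (Fin n) ℝ) (x : ℝ) : ℝ :=
  Phi P (min ⌊x⌋₊ n)

lemma bddAbove_phiSet {n : ℕ} (P : Matrix (Fin n) (Fin n) ℝ) (s : ℕ) :
    BddAbove ((fun B : Finset (Fin n) => ∑ i, ∑ j ∈ B, P i j) ''
      {B : Finset (Fin n) | B.card = s}) :=
  ((Set.toFinite _).image _).bddAbove

lemma le_Phi {n : ℕ} {P : Matrix (Fin n) (Fin n) ℝ} {s : ℕ} {B : Finset (Fin n)}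
    (hB : B.card = s) : ∑ i, ∑ j ∈ B, P i j ≤ Phi P s :=
  le_csSup (bddAbove_phiSet P s) ⟨B, hB, rfl⟩

lemma Phi_le_of_forall {n : ℕ} {P : Matrix (Fin n) (Fin n) ℝ} {s : ℕ} {x : ℝ}
    (hx : 0 ≤ x)
    (h : ∀ B : Finset (Fin n), B.card = s → ∑ i, ∑ j ∈ B, P i j ≤ x) :
    Phi P s ≤ x :=
  Real.sSup_le (by rintro _ ⟨B, hB, rfl⟩; exact h B hB) hx

lemma Phi_nonneg {n : ℕ} {P : Matrix (Fin n) (Fin n) ℝ}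
    (hP : ∀ i j, 0 ≤ P i j) (s : ℕ) : 0 ≤ Phi P s := by
  by_cases hs : s ≤ n
  · obtain ⟨B, -, hB⟩ := Finset.exists_subset_card_eq
      (show s ≤ (Finset.univ : Finset (Fin n)).card by simpa using hs)
    calc (0:ℝ) ≤ ∑ i, ∑ j ∈ B, P i j :=
          Finset.sum_nonneg fun i _ => Finset.sum_nonneg fun j _ => hP i j
      _ ≤ Phi P s := le_Phi hB
  · have hempty : {B : Finset (Fin n) | B.card = s} = ∅ := by
      ext B
      simp only [Set.mem_setOf_eq, Set.mem_empty_iff_false, iff_false]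
      intro h
      exact hs (h ▸ (by simpa using B.card_le_univ))
    simp [Phi, hempty, Real.sSup_empty]

lemma PhiR_nonneg {n : ℕ} {P : Matrix (Fin n) (Fin n) ℝ}
    (hP : ∀ i j, 0 ≤ P i j) (x : ℝ) : 0 ≤ PhiR P x :=
  Phi_nonneg hP _

/-- there is a set of the `m` largest coordinates of `w`. -/
lemma exists_top_set {n : ℕ} (w : Fin n → ℝ) :
    ∀ m : ℕ, m ≤ n → ∃ B : Finset (Fin n), B.card = m ∧
      ∀ i ∈ B, ∀ j ∉ B, w j ≤ w i := by
  intro m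
  induction m with
  | zero => intro _; exact ⟨∅, by simp⟩
  | succ m ih =>
    intro hm
    obtain ⟨B, hcard, htop⟩ := ih (Nat.le_of_succ_le hm)
    have hBc : Bᶜ.Nonempty := by
      rw [← Finset.card_pos, Finset.card_compl, hcard]
      simpa using Nat.lt_of_succ_le (by simpa using hm)
    obtain ⟨b, hb, hbmax⟩ := Bᶜ.exists_max_image w hBc
    have hbB : b ∉ B := by simpa using hb
    refine ⟨insert b B, by rw [Finset.card_insert_of_notMem hbB, hcard], ?_⟩
    intro i hi j hj
    rcases Finset.mem_insert.1 hi with rfl | hiB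
    · exact hbmax j (by simpa using fun h => hj (Finset.mem_insert_of_mem h))
    · exact htop i hiB j (fun h => hj (Finset.mem_insert_of_mem h))

/-- Key LP/vertex inequality: a `[0,1]`-weighted combination of column sums with
total weight at most `m` is at most `Φ_P(m)`. -/
lemma key_ineq {n : ℕ} (P : Matrix (Fin n) (Fin n) ℝ) (hP : ∀ i j, 0 ≤ P i j)
    (c : Fin n → ℝ) (hc0 : ∀ j, 0 ≤ c j) (hc1 : ∀ j, c j ≤ 1)
    (m : ℕ) (hm : m ≤ n) (hsum : ∑ j, c j ≤ (m : ℝ)) :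
    ∑ j, (∑ i, P i j) * c j ≤ Phi P m := by
  set w : Fin n → ℝ := fun j => ∑ i, P i j with hw
  have hw0 : ∀ j, 0 ≤ w j := fun j => Finset.sum_nonneg fun i _ => hP i j
  rcases Nat.eq_zero_or_pos m with rfl | hmpos
  · have hc : ∀ j ∈ Finset.univ, c j = 0 := by
      intro j _
      have h1 : ∑ j, c j ≤ 0 := by simpa using hsum
      have h2 : (0:ℝ) ≤ ∑ j, c j := Finset.sum_nonneg fun j _ => hc0 j
      have : ∑ j, c j = 0 := le_antisymm h1 h2
      exact (Finset.sum_eq_zero_iff_of_nonneg (fun j _ => hc0 j)).1 this j (Finset.mem_univ j)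
    have : ∑ j, w j * c j = 0 := Finset.sum_eq_zero fun j hj => by rw [hc j hj, mul_zero]
    rw [this]; exact Phi_nonneg hP 0
  · obtain ⟨B, hcard, htop⟩ := exists_top_set w m hm
    have hBne : B.Nonempty := Finset.card_pos.1 (hcard ▸ hmpos)
    set t : ℝ := B.inf' hBne w with ht
    obtain ⟨j₀, hj₀, hj₀eq⟩ := Finset.exists_mem_eq_inf' hBne w
    have ht0 : 0 ≤ t := by rw [ht, hj₀eq]; exact hw0 j₀
    have htle : ∀ i ∈ B, t ≤ w i := fun i hi => Finset.inf'_le w hi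
    have hout : ∀ j ∉ B, w j ≤ t := by intro j hj; rw [ht, hj₀eq]; exact htop j₀ hj₀ j hj
    have hsplit : ∑ j, w j * c j = ∑ j ∈ B, w j * c j + ∑ j ∈ Bᶜ, w j * c j :=
      (Finset.sum_add_sum_compl B _).symm
    have h1 : ∑ j ∈ Bᶜ, w j * c j ≤ t * ∑ j ∈ Bᶜ, c j := by
      rw [Finset.mul_sum]
      refine Finset.sum_le_sum fun j hj => ?_
      exact mul_le_mul_of_nonneg_right (hout j (by simpa using hj)) (hc0 j)
    have h2 : ∑ j ∈ Bᶜ, c j ≤ ∑ j ∈ B, (1 - c j) := by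
      have : ∑ j ∈ B, c j + ∑ j ∈ Bᶜ, c j = ∑ j, c j := Finset.sum_add_sum_compl B c
      have hB1 : ∑ j ∈ B, (1 - c j) = (m : ℝ) - ∑ j ∈ B, c j := by
        rw [Finset.sum_sub_distrib]
        simp [hcard]
      rw [hB1]
      linarith [hsum]
    have h3 : t * ∑ j ∈ Bᶜ, c j ≤ t * ∑ j ∈ B, (1 - c j) :=
      mul_le_mul_of_nonneg_left h2 ht0
    have h4 : t * ∑ j ∈ B, (1 - c j) ≤ ∑ j ∈ B, w j * (1 - c j) := by
      rw [Finset.mul_sum]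
      refine Finset.sum_le_sum fun j hj => ?_
      exact mul_le_mul_of_nonneg_right (htle j hj) (by linarith [hc1 j])
    have h5 : ∑ j ∈ B, w j * c j + ∑ j ∈ B, w j * (1 - c j) = ∑ j ∈ B, w j := by
      rw [← Finset.sum_add_distrib]
      exact Finset.sum_congr rfl fun j _ => by ring
    have h6 : ∑ j ∈ B, w j ≤ Phi P m := by
      have := le_Phi (P := P) hcard
      exact Finset.sum_comm.trans_le this
    calc ∑ j, w j * c j
        = ∑ j ∈ B, w j * c j + ∑ j ∈ Bᶜ, w j * c j := hsplit
      _ ≤ ∑ j ∈ B, w j * c j + ∑ j ∈ B, w j * (1 - c j) := by linarith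
      _ = ∑ j ∈ B, w j := h5
      _ ≤ Phi P m := h6

lemma pow_entry_nonneg {n : ℕ} {P : Matrix (Fin n) (Fin n) ℝ}
    (hP : ∀ i j, 0 ≤ P i j) (k : ℕ) : ∀ i j, 0 ≤ (P ^ k) i j := by
  induction k with
  | zero =>
    intro i j
    rw [pow_zero]
    by_cases h : i = j <;> simp [Matrix.one_apply, h]
  | succ k ih =>
    intro i j
    rw [pow_succ, Matrix.mul_apply]
    exact Finset.sum_nonneg fun l _ => mul_nonneg (ih i l) (hP l j)

lemma pow_row_sum {n : ℕ} {P : Matrix (Fin n) (Fin n) ℝ}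
    (hrow : ∀ i, ∑ j, P i j = 1) (k : ℕ) : ∀ i, ∑ j, (P ^ k) i j = 1 := by
  induction k with
  | zero =>
    intro i
    simp [Matrix.one_apply]
  | succ k ih =>
    intro i
    rw [pow_succ]
    simp only [Matrix.mul_apply]
    rw [Finset.sum_comm]
    calc ∑ l, ∑ j, (P ^ k) i l * P l j
        = ∑ l, (P ^ k) i l * ∑ j, P l j := by
          exact Finset.sum_congr rfl fun l _ => (Finset.mul_sum _ _ _).symm
      _ = ∑ l, (P ^ k) i l := by simp [hrow]
      _ = 1 := ih i

/-- Key recursive bound: `Φ_{P^{k+1}}(1) ≤ Φ_P^ℝ(Φ_{P^k}(1) + 1)`. -/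
lemma step_bound {n : ℕ} (P : Matrix (Fin n) (Fin n) ℝ)
    (hP : ∀ i j, 0 ≤ P i j) (hrow : ∀ i, ∑ j, P i j = 1) (k : ℕ) :
    Phi (P ^ (k+1)) 1 ≤ PhiR P (Phi (P ^ k) 1 + 1) := by
  set Q := P ^ k with hQ
  have hQnn : ∀ i j, 0 ≤ Q i j := pow_entry_nonneg hP k
  have hQrow : ∀ i, ∑ j, Q i j = 1 := pow_row_sum hrow k
  have hPhiQ0 : 0 ≤ Phi Q 1 := Phi_nonneg hQnn 1
  set m : ℕ := min ⌊Phi Q 1 + 1⌋₊ n with hm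
  refine Phi_le_of_forall (PhiR_nonneg hP _) (fun B hB => ?_)
  set c : Fin n → ℝ := fun l => ∑ j ∈ B, Q l j with hc
  have hc0 : ∀ l, 0 ≤ c l := fun l => Finset.sum_nonneg fun j _ => hQnn l j
  have hc1 : ∀ l, c l ≤ 1 := by
    intro l
    calc c l ≤ ∑ j, Q l j :=
          Finset.sum_le_sum_of_subset_of_nonneg (Finset.subset_univ B)
            (fun j _ _ => hQnn l j)
      _ = 1 := hQrow l
  have hcsum : ∑ l, c l ≤ (m : ℝ) := by
    have h1 : ∑ l, c l ≤ Phi Q 1 := le_Phi hB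
    have h2 : Phi Q 1 ≤ (⌊Phi Q 1 + 1⌋₊ : ℝ) := by
      have := Nat.lt_floor_add_one (Phi Q 1)
      have hfl : (⌊Phi Q 1⌋₊ : ℝ) + 1 ≤ (⌊Phi Q 1 + 1⌋₊ : ℝ) := by
        rw [Nat.floor_add_one hPhiQ0]
        push_cast
        ring_nf
        rfl
      linarith
    have h3 : ∑ l, c l ≤ (n : ℝ) := by
      calc ∑ l, c l ≤ ∑ _l : Fin n, (1:ℝ) := Finset.sum_le_sum fun l _ => hc1 l
        _ = n := by simp
    rw [hm]
    push_cast [Nat.cast_min]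
    exact le_min (le_trans h1 h2) h3
  have hrewrite : ∑ i, ∑ j ∈ B, (P ^ (k+1)) i j = ∑ l, (∑ i, P i l) * c l := by
    have hps : P ^ (k+1) = P * Q := by rw [hQ, pow_succ']
    rw [hps]
    simp only [Matrix.mul_apply]
    rw [Finset.sum_comm]
    calc ∑ j ∈ B, ∑ i, ∑ l, P i l * Q l j
        = ∑ j ∈ B, ∑ l, ∑ i, P i l * Q l j := by
          exact Finset.sum_congr rfl fun j _ => Finset.sum_comm
      _ = ∑ l, ∑ j ∈ B, ∑ i, P i l * Q l j := Finset.sum_comm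
      _ = ∑ l, (∑ i, P i l) * c l := by
          refine Finset.sum_congr rfl fun l _ => ?_
          rw [hc, Finset.mul_sum]
          refine Finset.sum_congr rfl fun j _ => ?_
          rw [Finset.sum_mul]
  rw [hrewrite]
  exact key_ineq P hP c hc0 hc1 m (min_le_right _ _) hcsum

/-- If a sequence of row-stochastic matrices has no prominent families, then
for every fixed `k` the maximum column average of `(P^{[n]})ᵏ` (which equals
`Φ_{(P^{[n]})ᵏ}(1)/n`) converges to `0`: the sequence is finite-time wise. -/
theorem no_prominent_families_implies_finite_time_wise
    (P : (n : ℕ) → Matrix (Fin n) (Fin n) ℝ)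
    (hP_nonneg : ∀ n i j, 0 ≤ P n i j)
    (hP_row : ∀ (n : ℕ) (i : Fin n), ∑ j, P n i j = 1)
    (h_no_prominent : ∀ a : ℕ → ℝ, (∀ n, 0 ≤ a n) →
      Tendsto (fun n => a n / n) atTop (nhds 0) →
      Tendsto (fun n => PhiR (P n) (a n) / n) atTop (nhds 0)) :
    ∀ k : ℕ, Tendsto (fun n => Phi ((P n) ^ k) 1 / n) atTop (nhds 0) := by
  intro k
  induction k with
  | zero =>
    have heq : ∀ n : ℕ, 1 ≤ n → Phi ((P n) ^ 0) 1 = 1 := by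
      intro n hn
      rw [pow_zero]
      have hval : ∀ B : Finset (Fin n), B.card = 1 →
          ∑ i, ∑ j ∈ B, (1 : Matrix (Fin n) (Fin n) ℝ) i j = 1 := by
        intro B hB
        rw [show (∑ i, ∑ j ∈ B, (1 : Matrix (Fin n) (Fin n) ℝ) i j) = ∑ j ∈ B, ∑ i, (1 : Matrix (Fin n) (Fin n) ℝ) i j from Finset.sum_comm]
        have : ∀ j ∈ B, ∑ i, (1 : Matrix (Fin n) (Fin n) ℝ) i j = 1 := by
          intro j _
          simp [Matrix.one_apply]
        rw [Finset.sum_congr rfl this]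
        simp [hB]
      haveI : NeZero n := ⟨by omega⟩
      have hwit : ({0} : Finset (Fin n)).card = 1 := by simp
      refine le_antisymm (Phi_le_of_forall zero_le_one fun B hB => (hval B hB).le) ?_
      calc (1:ℝ) = ∑ i, ∑ j ∈ ({0} : Finset (Fin n)),
            (1 : Matrix (Fin n) (Fin n) ℝ) i j := (hval _ hwit).symm
        _ ≤ _ := le_Phi hwit
    have : Tendsto (fun n : ℕ => 1 / (n:ℝ)) atTop (nhds 0) :=
      tendsto_one_div_atTop_nhds_zero_nat
    refine this.congr' ?_
    filter_upwards [eventually_ge_atTop 1] with n hn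
    rw [heq n hn]
  | succ k ih =>
    set a : ℕ → ℝ := fun n => Phi ((P n) ^ k) 1 + 1 with ha
    have ha0 : ∀ n, 0 ≤ a n := fun n => by
      have := Phi_nonneg (pow_entry_nonneg (hP_nonneg n) k) 1
      simp only [ha]; linarith
    have hadiv : Tendsto (fun n => a n / n) atTop (nhds 0) := by
      have h2 : Tendsto (fun n : ℕ => 1 / (n:ℝ)) atTop (nhds 0) :=
        tendsto_one_div_atTop_nhds_zero_nat
      have := ih.add h2
      rw [add_zero] at this
      refine this.congr fun n => ?_
      simp only [ha]
      ring
    have hph := h_no_prominent a ha0 hadiv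
    refine tendsto_of_tendsto_of_tendsto_of_le_of_le tendsto_const_nhds hph ?_ ?_
    · intro n
      exact div_nonneg (Phi_nonneg (pow_entry_nonneg (hP_nonneg n) (k+1)) 1)
        (Nat.cast_nonneg n)
    · intro n
      exact div_le_div_of_nonneg_right
        (step_bound (P n) (hP_nonneg n) (hP_row n) k) (Nat.cast_nonneg n)
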